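/- Let θ be a non-degenerate semi-basic 1-form on E with d(L_Sθ) = 0. Then there exists a regular Lagrangian L on E such that: (1) L_Sθ = dL; (2) θ = θ_L + (θ(S) − L) dt, i.e., θ is equivalent modulo dt to the Poincaré–Cartan 1-form θ_L; (3) the function θ(S) − L is a first integral of S, i.e., S(θ(S) − L) = 0; and (4) the 1-form i_Sdθ is a dual symmetry of S, i.e., L_S(i_Sdθ) = 0. -/

import Mathlib

noncomputable section

/-- The local model `E = ℝ × (Fin n → ℝ) × (Fin n → ℝ)` of the first jet bundle `J¹π`,
with coordinates `(t, xⁱ, yⁱ)`.  Tangent vectors at a point are identified with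
elements of `E n` itself. -/
abbrev E (n : ℕ) : Type := ℝ × (Fin n → ℝ) × (Fin n → ℝ)

variable {n : ℕ}

/-- A map between normed spaces is `C^∞`-smooth. -/
def Cinf {α β : Type*} [NormedAddCommGroup α] [NormedSpace ℝ α]
    [NormedAddCommGroup β] [NormedSpace ℝ β] (f : α → β) : Prop :=
  ContDiff ℝ (⊤ : ℕ∞) f

/-- A tangent vector having only a `y`-component. -/
def ypart (w : Fin n → ℝ) : E n := (0, 0, w)

/-- The coordinate vector `∂/∂yⁱ`. -/
def pdy (i : Fin n) : E n := ypart (Pi.single i 1)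

/-- The coordinate vector `∂/∂xⁱ`. -/
def pdx (i : Fin n) : E n := (0, Pi.single i 1, 0)

/-- Action of a vector field `X` on a function `f`: `X(f)(p) = df_p(X(p))`. -/
def vfd (X : E n → E n) (f : E n → ℝ) : E n → ℝ := fun p => fderiv ℝ f p (X p)

/-- Lie bracket of vector fields on `E n`. -/
def lieb (X Y : E n → E n) : E n → E n :=
  fun p => fderiv ℝ Y p (X p) - fderiv ℝ X p (Y p)

/-- The semispray `S = ∂/∂t + Σ yⁱ ∂/∂xⁱ − 2 Σ Gⁱ ∂/∂yⁱ` associated to `G`. -/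
def Ssp (G : E n → Fin n → ℝ) : E n → E n := fun p => (1, p.2.2, fun i => -(2 * G p i))

/-- Nonlinear connection coefficients `Nⁱⱼ = ∂Gⁱ/∂yʲ`. -/
def Nc (G : E n → Fin n → ℝ) (i j : Fin n) : E n → ℝ :=
  fun p => fderiv ℝ (fun q => G q i) p (pdy j)

/-- `Nⁱ₀ = 2Gⁱ − Σⱼ Nⁱⱼ yʲ`. -/
def N0c (G : E n → Fin n → ℝ) (i : Fin n) : E n → ℝ :=
  fun p => 2 * G p i - ∑ j, Nc G i j p * p.2.2 j

/-- The horizontal vector field `δ/δxⁱ = ∂/∂xⁱ − Σⱼ Nʲᵢ ∂/∂yʲ`. -/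
def ddx (G : E n → Fin n → ℝ) (i : Fin n) : E n → E n :=
  fun p => (0, Pi.single i 1, fun j => -(Nc G j i p))

/-- The contact 1-form `δxⁱ = dxⁱ − yⁱ dt`. -/
def dxi (i : Fin n) : E n → E n → ℝ := fun p w => w.2.1 i - p.2.2 i * w.1

/-- The 1-form `δyⁱ = dyⁱ + Σⱼ Nⁱⱼ dxʲ + Nⁱ₀ dt`. -/
def dyi (G : E n → Fin n → ℝ) (i : Fin n) : E n → E n → ℝ :=
  fun p w => w.2.2 i + (∑ j, Nc G i j p * w.2.1 j) + N0c G i p * w.1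

/-- The vertical endomorphism `J = Σᵢ ∂/∂yⁱ ⊗ δxⁱ`. -/
def Jv : E n → E n → E n := fun p w => ypart (fun i => dxi i p w)

/-- The horizontal projector `h = S ⊗ dt + Σᵢ δ/δxⁱ ⊗ δxⁱ`. -/
def hv (G : E n → Fin n → ℝ) : E n → E n → E n :=
  fun p w => w.1 • Ssp G p + ∑ i, dxi i p w • ddx G i p

/-- Jacobi endomorphism components `Rⁱⱼ = 2 ∂Gⁱ/∂xʲ − Σₖ Nⁱₖ Nᵏⱼ − S(Nⁱⱼ)`. -/
def Rjac (G : E n → Fin n → ℝ) (i j : Fin n) : E n → ℝ := fun p =>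
  2 * fderiv ℝ (fun q => G q i) p (pdx j) - (∑ k, Nc G i k p * Nc G k j p)
    - vfd (Ssp G) (Nc G i j) p

/-- Curvature components `Rⁱⱼₖ = (δ/δxᵏ)(Nⁱⱼ) − (δ/δxʲ)(Nⁱₖ)`. -/
def Rcur (G : E n → Fin n → ℝ) (i j k : Fin n) : E n → ℝ := fun p =>
  fderiv ℝ (Nc G i j) p (ddx G k p) - fderiv ℝ (Nc G i k) p (ddx G j p)

/-- The Jacobi endomorphism `Φ = Σᵢⱼ Rʲᵢ ∂/∂yʲ ⊗ δxⁱ`. -/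
def Phi (G : E n → Fin n → ℝ) : E n → E n → E n :=
  fun p w => ypart (fun j => ∑ i, Rjac G j i p * dxi i p w)

/-- The tensor `Ψ = Σᵢ δ/δxⁱ ⊗ δyⁱ − Σᵢⱼ Rʲᵢ ∂/∂yʲ ⊗ δxⁱ`. -/
def Psi (G : E n → Fin n → ℝ) : E n → E n → E n :=
  fun p w => (∑ i, dyi G i p w • ddx G i p) - Phi G p w

/-- Lie derivative of a 1-form `θ` along `X`, evaluated on a vector field `Y`:
`(L_Xθ)(Y) = X(θ(Y)) − θ([X,Y])`. -/
def lieD (X : E n → E n) (θ : E n → E n → ℝ) (Y : E n → E n) : E n → ℝ :=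
  fun p => fderiv ℝ (fun q => θ q (Y q)) p (X p) - θ p (lieb X Y p)

/-- Exterior derivative of a 1-form: `dθ(X,Y) = X(θ(Y)) − Y(θ(X)) − θ([X,Y])`. -/
def extD (θ : E n → E n → ℝ) (X Y : E n → E n) : E n → ℝ :=
  fun p => fderiv ℝ (fun q => θ q (Y q)) p (X p) - fderiv ℝ (fun q => θ q (X q)) p (Y p)
    - θ p (lieb X Y p)

/-- Exterior derivative of a 1-form given as an operator on vector fields. -/
def extDop (α : (E n → E n) → E n → ℝ) (X Y : E n → E n) : E n → ℝ :=
  fun p => fderiv ℝ (α Y) p (X p) - fderiv ℝ (α X) p (Y p) - α (lieb X Y) p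

/-- The semi-basic 1-form `θ₀ dt + Σᵢ θᵢ δxⁱ`. -/
def sbform (θ0 : E n → ℝ) (θc : Fin n → E n → ℝ) : E n → E n → ℝ :=
  fun p w => θ0 p * w.1 + ∑ i, θc i p * dxi i p w

/-- `d_Jθ(X,Y) = dθ(JX,Y) + dθ(X,JY)` for a semi-basic 1-form `θ`. -/
def dJf (θ : E n → E n → ℝ) (X Y : E n → E n) : E n → ℝ :=
  fun p => extD θ (fun q => Jv q (X q)) Y p + extD θ X (fun q => Jv q (Y q)) p

/-- `d_hθ(X,Y) = dθ(hX,Y) + dθ(X,hY) − dθ(X,Y)` for a semi-basic 1-form `θ`. -/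
def dhf (G : E n → Fin n → ℝ) (θ : E n → E n → ℝ) (X Y : E n → E n) : E n → ℝ :=
  fun p => extD θ (fun q => hv G q (X q)) Y p + extD θ X (fun q => hv G q (Y q)) p
    - extD θ X Y p

/-- `d_Φθ(X,Y) = dθ(ΦX,Y) + dθ(X,ΦY)` for a semi-basic 1-form `θ`. -/
def dPhif (G : E n → Fin n → ℝ) (θ : E n → E n → ℝ) (X Y : E n → E n) : E n → ℝ :=
  fun p => extD θ (fun q => Phi G q (X q)) Y p + extD θ X (fun q => Phi G q (Y q)) p

/-- Lie derivative of the 2-form `dθ` along a vector field `SS`: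
`(L_S dθ)(X,Y) = S(dθ(X,Y)) − dθ([S,X],Y) − dθ(X,[S,Y])`. -/
def lieD2 (SS : E n → E n) (θ : E n → E n → ℝ) (X Y : E n → E n) : E n → ℝ :=
  fun p => fderiv ℝ (extD θ X Y) p (SS p) - extD θ (lieb SS X) Y p - extD θ X (lieb SS Y) p

/-- `∇dθ = L_S(dθ) − i_Ψ(dθ)`. -/
def nabD (G : E n → Fin n → ℝ) (θ : E n → E n → ℝ) (X Y : E n → E n) : E n → ℝ :=
  fun p => lieD2 (Ssp G) θ X Y p
    - (extD θ (fun q => Psi G q (X q)) Y p + extD θ X (fun q => Psi G q (Y q)) p)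

/-- The dynamical covariant derivative of an `n`-tuple of functions:
`(∇f)ᵢ = S(fᵢ) − Σⱼ Nʲᵢ fⱼ`. -/
def covd (G : E n → Fin n → ℝ) (f : Fin n → E n → ℝ) : Fin n → E n → ℝ :=
  fun i p => vfd (Ssp G) (f i) p - ∑ j, Nc G j i p * f j p

/-- Pointwise value of `dθ` on tangent vectors, via constant vector fields. -/
def Dpt (θ : E n → E n → ℝ) (p u w : E n) : ℝ := extD θ (fun _ => u) (fun _ => w) p

/-- The 2-form `dθ + (i_S dθ)∧dt`, pointwise. -/
def Om (G : E n → Fin n → ℝ) (θ : E n → E n → ℝ) (p u w : E n) : ℝ :=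
  Dpt θ p u w + Dpt θ p (Ssp G p) u * w.1 - Dpt θ p (Ssp G p) w * u.1

/-- The coordinate basis `∂/∂t, ∂/∂xⁱ, ∂/∂yⁱ` of the tangent space. -/
def bas {n : ℕ} : Unit ⊕ Fin n ⊕ Fin n → E n :=
  Sum.elim (fun _ => ((1 : ℝ), 0, 0)) (Sum.elim pdx pdy)

/-- A semi-basic 1-form `θ` is non-degenerate if the 2-form `dθ + (i_S dθ)∧dt`
has rank `2n` at every point. -/
def nondeg (G : E n → Fin n → ℝ) (θ : E n → E n → ℝ) : Prop :=
  ∀ p : E n, (Matrix.of fun a b => Om G θ p (bas a) (bas b)).rank = 2 * n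

/-- The Hessian matrix `(∂²L/∂yⁱ∂yʲ)` of a Lagrangian `L`. -/
def Hess (L : E n → ℝ) (p : E n) : Matrix (Fin n) (Fin n) ℝ :=
  Matrix.of fun i j => fderiv ℝ (fun q => fderiv ℝ L q (pdy j)) p (pdy i)

/-- A Lagrangian is regular if its Hessian in the fibre coordinates is invertible
at every point. -/
def regular (L : E n → ℝ) : Prop := ∀ p : E n, IsUnit (Hess L p)


section Poincare
open intervalIntegral MeasureTheory Metric
variable {V : Type*} [NormedAddCommGroup V] [NormedSpace ℝ V] [FiniteDimensional ℝ V]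

theorem poincare1 (α : V → V →L[ℝ] ℝ) (hα : ContDiff ℝ (⊤ : ℕ∞) α)
    (hsym : ∀ p u w, fderiv ℝ α p u w = fderiv ℝ α p w u) :
    ∃ L : V → ℝ, ContDiff ℝ (⊤ : ℕ∞) L ∧ ∀ p, HasFDerivAt L (α p) p := by
  classical
  have hαd : Differentiable ℝ α := hα.differentiable (by simp)
  have hα' : ContDiff ℝ (⊤ : ℕ∞) (fderiv ℝ α) := hα.fderiv_right (by exact_mod_cast le_top)
  have hαc : Continuous α := hα.continuous
  have hα'c : Continuous (fderiv ℝ α) := hα'.continuous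
  have hflip : Continuous (ContinuousLinearMap.flip :
      (V →L[ℝ] V →L[ℝ] ℝ) → (V →L[ℝ] V →L[ℝ] ℝ)) := by
    exact (ContinuousLinearMap.flipₗᵢ (𝕜 := ℝ) (E := V) (Fₗ := V) (Gₗ := ℝ)).continuous
  have happ : Continuous fun q : (V →L[ℝ] ℝ) × V => q.1 q.2 :=
    isBoundedBilinearMap_apply.continuous
  have happ2 : Continuous fun q : (V →L[ℝ] V →L[ℝ] ℝ) × V => q.1 q.2 :=
    isBoundedBilinearMap_apply.continuous
  set L : V → ℝ := fun p => ∫ s in (0:ℝ)..1, α (s • p) p with hLdef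
  set Fd : V → ℝ → (V →L[ℝ] ℝ) := fun x t => α (t • x) + t • ((fderiv ℝ α (t • x)).flip x)
    with hFd
  have hsm : Continuous fun q : ℝ × V => q.1 • q.2 := continuous_fst.smul continuous_snd
  have hFdcont : Continuous fun q : ℝ × V => Fd q.2 q.1 := by
    apply Continuous.add
    · exact hαc.comp hsm
    · apply continuous_fst.smul
      exact happ2.comp (((hflip.comp (hα'c.comp hsm))).prodMk continuous_snd)
  have hFcont : Continuous fun q : ℝ × V => α (q.1 • q.2) q.2 :=
    happ.comp ((hαc.comp hsm).prodMk continuous_snd)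
  have hdiff : ∀ (t : ℝ) (x : V), HasFDerivAt (fun y => α (t • y) y) (Fd x t) x := by
    intro t x
    have h1 : HasFDerivAt (fun y : V => t • y) (t • ContinuousLinearMap.id ℝ V) x :=
      (hasFDerivAt_id x).const_smul t
    have hcomp : HasFDerivAt (fun y : V => α (t • y))
        ((fderiv ℝ α (t • x)).comp (t • ContinuousLinearMap.id ℝ V)) x :=
      (hαd (t • x)).hasFDerivAt.comp x h1
    have h2 := hcomp.clm_apply (hasFDerivAt_id x)
    refine h2.congr_fderiv ?_
    ext w
    simp [Fd, ContinuousLinearMap.flip_apply, mul_comm]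
  have key : ∀ p : V, HasFDerivAt L (α p) p := by
    intro x₀
    obtain ⟨C, hC⟩ : ∃ C, ∀ q ∈ (Set.Icc (0:ℝ) 1 ×ˢ closedBall x₀ 1), ‖Fd q.2 q.1‖ ≤ C := by
      have hK : IsCompact (Set.Icc (0:ℝ) 1 ×ˢ closedBall x₀ 1) :=
        isCompact_Icc.prod (isCompact_closedBall x₀ 1)
      rcases hK.exists_bound_of_continuousOn hFdcont.norm.continuousOn with ⟨C, hC⟩
      exact ⟨C, fun q hq => by simpa using hC q hq⟩
    have hmeas : ∀ᶠ x in nhds x₀, AEStronglyMeasurable (fun t => α (t • x) x)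
        ((volume : Measure ℝ).restrict (Set.uIoc (0:ℝ) 1)) := by
      refine Filter.Eventually.of_forall fun x => Continuous.aestronglyMeasurable ?_
      exact hFcont.comp (continuous_id.prodMk continuous_const)
    have hint0 : IntervalIntegrable (fun t => α (t • x₀) x₀) volume 0 1 :=
      Continuous.intervalIntegrable (hFcont.comp (continuous_id.prodMk continuous_const)) _ _
    have hmeas' : AEStronglyMeasurable (fun t => Fd x₀ t)
        ((volume : Measure ℝ).restrict (Set.uIoc (0:ℝ) 1)) :=
      Continuous.aestronglyMeasurable (hFdcont.comp (continuous_id.prodMk continuous_const))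
    have hbound : ∀ᵐ t ∂(volume : Measure ℝ), t ∈ Set.uIoc (0:ℝ) 1 →
        ∀ x ∈ ball x₀ 1, ‖Fd x t‖ ≤ C := by
      refine Filter.Eventually.of_forall fun t ht x hx => hC ⟨t, x⟩ ⟨?_, ball_subset_closedBall hx⟩
      have : t ∈ Set.Ioc (0:ℝ) 1 := by simpa [Set.uIoc_of_le (zero_le_one)] using ht
      exact ⟨this.1.le, this.2⟩
    have hdiff' : ∀ᵐ t ∂(volume : Measure ℝ), t ∈ Set.uIoc (0:ℝ) 1 →
        ∀ x ∈ ball x₀ 1, HasFDerivAt (fun y => α (t • y) y) (Fd x t) x :=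
      Filter.Eventually.of_forall fun t _ x _ => hdiff t x
    have main := intervalIntegral.hasFDerivAt_integral_of_dominated_of_fderiv_le
      (F := fun x t => α (t • x) x) (F' := fun x t => Fd x t) (x₀ := x₀)
      (bound := fun _ => C) (ball_mem_nhds x₀ one_pos) hmeas hint0 hmeas' hbound intervalIntegrable_const hdiff'
    have hint : (∫ t in (0:ℝ)..1, Fd x₀ t) = α x₀ := by
      have hFdint : IntervalIntegrable (Fd x₀) volume 0 1 :=
        Continuous.intervalIntegrable (hFdcont.comp (continuous_id.prodMk continuous_const)) _ _
      ext w
      rw [ContinuousLinearMap.intervalIntegral_apply hFdint]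
      have heval : ∀ t : ℝ, Fd x₀ t w = α (t • x₀) w + t * (fderiv ℝ α (t • x₀) x₀ w) := by
        intro t
        simp [Fd, ContinuousLinearMap.flip_apply, hsym (t • x₀) w x₀]
      have hderiv : ∀ t ∈ Set.uIcc (0:ℝ) 1,
          HasDerivAt (fun s => s * (α (s • x₀) w)) (Fd x₀ t w) t := by
        intro t _
        have h1 : HasDerivAt (fun s : ℝ => s • x₀) x₀ t := by
          simpa using (hasDerivAt_id t).smul_const x₀
        have h2 : HasDerivAt (fun s : ℝ => α (s • x₀)) (fderiv ℝ α (t • x₀) x₀) t :=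
          (hαd (t • x₀)).hasFDerivAt.comp_hasDerivAt t h1
        have h3 : HasDerivAt (fun s : ℝ => α (s • x₀) w) (fderiv ℝ α (t • x₀) x₀ w) t :=
          (ContinuousLinearMap.apply ℝ ℝ w).hasFDerivAt.comp_hasDerivAt t h2
        have h4 := (hasDerivAt_id t).fun_mul h3
        rw [heval t]
        refine h4.congr_deriv ?_
        simp only [id_eq]
        ring
      have hcc : Continuous fun t : ℝ => Fd x₀ t w :=
        happ.comp ((hFdcont.comp (continuous_id.prodMk continuous_const)).prodMk
          continuous_const)
      have hftc := intervalIntegral.integral_eq_sub_of_hasDerivAt hderiv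
        (Continuous.intervalIntegrable hcc _ _)
      rw [hftc]
      simp
    rw [← hint]
    exact main
  refine ⟨L, ?_, key⟩
  have hfd : fderiv ℝ L = α := funext fun p => (key p).fderiv
  rw [contDiff_infty_iff_fderiv]
  exact ⟨fun p => (key p).differentiableAt, by rw [hfd]; exact hα⟩

end Poincare
namespace S14

open ContinuousLinearMap

variable {n : ℕ}

lemma cinf_diff {α β : Type*} [NormedAddCommGroup α] [NormedSpace ℝ α]
    [NormedAddCommGroup β] [NormedSpace ℝ β] {f : α → β} (h : Cinf f) :
    Differentiable ℝ f := h.differentiable (by simp)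

lemma cinf_fderiv {α β : Type*} [NormedAddCommGroup α] [NormedSpace ℝ α]
    [NormedAddCommGroup β] [NormedSpace ℝ β] {f : α → β} (h : Cinf f) :
    Cinf (fderiv ℝ f) := h.fderiv_right (by exact_mod_cast le_top)

lemma fderiv_app {X Y : Type*} [NormedAddCommGroup X] [NormedSpace ℝ X]
    [NormedAddCommGroup Y] [NormedSpace ℝ Y]
    {F : X → X →L[ℝ] Y} {p : X} (hF : DifferentiableAt ℝ F p) (u v : X) :
    fderiv ℝ (fun q => F q u) p v = (fderiv ℝ F p v) u := by
  have h := (hF.hasFDerivAt.clm_apply (hasFDerivAt_const u p)).fderiv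
  rw [h]
  simp

def tL : E n →L[ℝ] ℝ := ContinuousLinearMap.fst ℝ ℝ _

def xyL : E n →L[ℝ] ((Fin n → ℝ) × (Fin n → ℝ)) := ContinuousLinearMap.snd ℝ ℝ _

def xL (i : Fin n) : E n →L[ℝ] ℝ :=
  (ContinuousLinearMap.proj i).comp ((ContinuousLinearMap.fst ℝ _ _).comp xyL)

def yL (i : Fin n) : E n →L[ℝ] ℝ :=
  (ContinuousLinearMap.proj i).comp ((ContinuousLinearMap.snd ℝ _ _).comp xyL)

def y2L : E n →L[ℝ] (Fin n → ℝ) := (ContinuousLinearMap.snd ℝ _ _).comp xyL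

@[simp] lemma tL_apply (w : E n) : tL w = w.1 := rfl
@[simp] lemma xL_apply (i : Fin n) (w : E n) : xL i w = w.2.1 i := rfl
@[simp] lemma yL_apply (i : Fin n) (w : E n) : yL i w = w.2.2 i := rfl
@[simp] lemma y2L_apply (w : E n) : y2L w = w.2.2 := rfl

variable {G : E n → Fin n → ℝ} {θ0 : E n → ℝ} {θc : Fin n → E n → ℝ}

/-- The semi-basic form as a continuous-linear-map valued function. -/
def Af (θ0 : E n → ℝ) (θc : Fin n → E n → ℝ) (p : E n) : E n →L[ℝ] ℝ :=
  θ0 p • tL + ∑ i, θc i p • (xL i - p.2.2 i • tL)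

lemma Af_apply (p w : E n) : Af θ0 θc p w = sbform θ0 θc p w := by
  simp [Af, sbform, dxi, mul_comm]

lemma Af_smooth (h0 : Cinf θ0) (hc : ∀ i, Cinf (θc i)) : Cinf (Af θ0 θc) := by
  refine ContDiff.add (h0.smul contDiff_const) (ContDiff.sum fun i _ => ?_)
  exact (hc i).smul (contDiff_const.sub (((yL i).contDiff).smul contDiff_const))

lemma Ssp_eq : Ssp G = fun p => ((1:ℝ), p.2.2, (-2:ℝ) • G p) := by
  funext p
  refine Prod.ext rfl (Prod.ext rfl ?_)
  funext i
  simp only [Ssp, Pi.smul_apply, smul_eq_mul]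
  ring

lemma Ssp_smooth (hG : Cinf G) : Cinf (Ssp G) := by
  rw [Ssp_eq]
  exact contDiff_const.prodMk ((y2L.contDiff).prodMk (hG.const_smul (-2:ℝ)))

/-- Explicit derivative of the semispray. -/
def SD (G : E n → Fin n → ℝ) (p : E n) : E n →L[ℝ] E n :=
  (0 : E n →L[ℝ] ℝ).prod (y2L.prod ((-2 : ℝ) • fderiv ℝ G p))

lemma hasFDerivAt_Ssp (hG : Cinf G) (p : E n) : HasFDerivAt (Ssp G) (SD G p) p := by
  rw [Ssp_eq]
  exact (hasFDerivAt_const _ _).prodMk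
    (y2L.hasFDerivAt.prodMk (((cinf_diff hG) p).hasFDerivAt.const_smul (-2:ℝ)))

lemma fderiv_Ssp (hG : Cinf G) (p : E n) : fderiv ℝ (Ssp G) p = SD G p :=
  (hasFDerivAt_Ssp hG p).fderiv

end S14
namespace S14

open ContinuousLinearMap

variable {n : ℕ} {G : E n → Fin n → ℝ} {θ0 : E n → ℝ} {θc : Fin n → E n → ℝ}

/-- The one-form `L_S θ` as a CLM-valued function. -/
def alf (G : E n → Fin n → ℝ) (θ0 : E n → ℝ) (θc : Fin n → E n → ℝ) (p : E n) :
    E n →L[ℝ] ℝ :=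
  fderiv ℝ (Af θ0 θc) p (Ssp G p) + (Af θ0 θc p).comp (fderiv ℝ (Ssp G) p)

lemma alf_smooth (hG : Cinf G) (h0 : Cinf θ0) (hc : ∀ i, Cinf (θc i)) :
    Cinf (alf G θ0 θc) := by
  refine ContDiff.add ?_ ?_
  · exact (cinf_fderiv (Af_smooth h0 hc)).clm_apply (Ssp_smooth hG)
  · exact (Af_smooth h0 hc).clm_comp (cinf_fderiv (Ssp_smooth hG))

lemma lieD_eq (hG : Cinf G) (h0 : Cinf θ0) (hc : ∀ i, Cinf (θc i))
    {X : E n → E n} (hX : Differentiable ℝ X) (p : E n) :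
    lieD (Ssp G) (sbform θ0 θc) X p = alf G θ0 θc p (X p) := by
  have hAd : Differentiable ℝ (Af θ0 θc) := cinf_diff (Af_smooth h0 hc)
  have hrw : (fun q => sbform θ0 θc q (X q)) = fun q => Af θ0 θc q (X q) :=
    funext fun q => (Af_apply q (X q)).symm
  have h2 : sbform θ0 θc p (lieb (Ssp G) X p)
      = Af θ0 θc p (fderiv ℝ X p (Ssp G p)) - Af θ0 θc p (fderiv ℝ (Ssp G) p (X p)) := by
    rw [← Af_apply]
    show Af θ0 θc p (fderiv ℝ X p (Ssp G p) - fderiv ℝ (Ssp G) p (X p)) = _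
    rw [map_sub]
  show fderiv ℝ (fun q => sbform θ0 θc q (X q)) p (Ssp G p) - sbform θ0 θc p (lieb (Ssp G) X p)
      = alf G θ0 θc p (X p)
  rw [hrw, h2, fderiv_clm_apply (hAd p) (hX p)]
  simp only [alf, ContinuousLinearMap.add_apply, ContinuousLinearMap.comp_apply,
    ContinuousLinearMap.flip_apply]
  ring

lemma sbform_S (q : E n) : sbform θ0 θc q (Ssp G q) = θ0 q := by
  simp [sbform, Ssp, dxi]

lemma Af_S (q : E n) : Af θ0 θc q (Ssp G q) = θ0 q := by
  rw [Af_apply]; exact sbform_S q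

lemma Af_ypart (q : E n) (v : Fin n → ℝ) : Af θ0 θc q (ypart v) = 0 := by
  rw [Af_apply]; simp [sbform, dxi, ypart]

lemma alf_pdy (hG : Cinf G) (h0 : Cinf θ0) (hc : ∀ i, Cinf (θc i)) (p : E n) (i : Fin n) :
    alf G θ0 θc p (pdy i) = θc i p := by
  have hAd : Differentiable ℝ (Af θ0 θc) := cinf_diff (Af_smooth h0 hc)
  have h1 : fderiv ℝ (Af θ0 θc) p (Ssp G p) (pdy i) = 0 := by
    rw [← fderiv_app (hAd p)]
    have : (fun q => Af θ0 θc q (pdy i)) = fun _ => (0:ℝ) :=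
      funext fun q => Af_ypart q _
    rw [this, fderiv_fun_const]
    simp
  have h2 : Af θ0 θc p (fderiv ℝ (Ssp G) p (pdy i)) = θc i p := by
    rw [fderiv_Ssp hG, Af_apply]
    show sbform θ0 θc p ((0:ℝ), Pi.single i 1, _) = θc i p
    simp [sbform, dxi, Pi.single_apply]
  show fderiv ℝ (Af θ0 θc) p (Ssp G p) (pdy i) + Af θ0 θc p (fderiv ℝ (Ssp G) p (pdy i)) = θc i p
  rw [h1, h2, zero_add]

lemma alf_S (hG : Cinf G) (h0 : Cinf θ0) (hc : ∀ i, Cinf (θc i)) (p : E n) :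
    alf G θ0 θc p (Ssp G p) = fderiv ℝ θ0 p (Ssp G p) := by
  have hAd : Differentiable ℝ (Af θ0 θc) := cinf_diff (Af_smooth h0 hc)
  have hSd : Differentiable ℝ (Ssp G) := cinf_diff (Ssp_smooth hG)
  have h1 : (fun q => Af θ0 θc q (Ssp G q)) = θ0 := funext fun q => Af_S q
  have h2 := fderiv_clm_apply (hAd p) (hSd p)
  rw [h1] at h2
  have h3 := congrArg (fun (c : E n →L[ℝ] ℝ) => c (Ssp G p)) h2
  simp only [ContinuousLinearMap.add_apply, ContinuousLinearMap.comp_apply,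
    ContinuousLinearMap.flip_apply] at h3
  show fderiv ℝ (Af θ0 θc) p (Ssp G p) (Ssp G p)
      + Af θ0 θc p (fderiv ℝ (Ssp G) p (Ssp G p)) = fderiv ℝ θ0 p (Ssp G p)
  rw [h3]
  ring

lemma alf_symm (hG : Cinf G) (h0 : Cinf θ0) (hc : ∀ i, Cinf (θc i))
    (hcl : ∀ X Y : E n → E n, Cinf X → Cinf Y → ∀ p : E n,
      extDop (lieD (Ssp G) (sbform θ0 θc)) X Y p = 0)
    (p u w : E n) :
    fderiv ℝ (alf G θ0 θc) p u w = fderiv ℝ (alf G θ0 θc) p w u := by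
  have had : Differentiable ℝ (alf G θ0 θc) := cinf_diff (alf_smooth hG h0 hc)
  have hval : ∀ z : E n, lieD (Ssp G) (sbform θ0 θc) (fun _ => z) = fun q => alf G θ0 θc q z :=
    fun z => funext fun q => lieD_eq hG h0 hc (differentiable_const z) q
  have hlieb : ∀ z z' : E n, lieb (fun _ : E n => z) (fun _ : E n => z') = fun _ => (0 : E n) := by
    intro z z'
    funext q
    simp [lieb, fderiv_const]
  have h := hcl (fun _ => u) (fun _ => w) contDiff_const contDiff_const p
  unfold extDop at h
  rw [hval u, hval w, hlieb] at h
  have h0' : lieD (Ssp G) (sbform θ0 θc) (fun _ => (0:E n)) p = 0 := by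
    rw [lieD_eq hG h0 hc (differentiable_const _) p, map_zero]
  rw [h0'] at h
  rw [fderiv_app (had p), fderiv_app (had p)] at h
  linarith

end S14
namespace S14

open ContinuousLinearMap

variable {n : ℕ} {G : E n → Fin n → ℝ} {θ0 : E n → ℝ} {θc : Fin n → E n → ℝ}

lemma Dpt_eq (h0 : Cinf θ0) (hc : ∀ i, Cinf (θc i)) (p u w : E n) :
    Dpt (sbform θ0 θc) p u w
      = fderiv ℝ (Af θ0 θc) p u w - fderiv ℝ (Af θ0 θc) p w u := by
  have hAd : Differentiable ℝ (Af θ0 θc) := cinf_diff (Af_smooth h0 hc)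
  have hzero : lieb (fun _ : E n => u) (fun _ : E n => w) p = 0 := by
    simp [lieb, fderiv_const]
  show fderiv ℝ (fun q => sbform θ0 θc q w) p u - fderiv ℝ (fun q => sbform θ0 θc q u) p w
      - sbform θ0 θc p (lieb (fun _ => u) (fun _ => w) p) = _
  rw [hzero]
  have h1 : (fun q => sbform θ0 θc q w) = fun q => Af θ0 θc q w :=
    funext fun q => (Af_apply q w).symm
  have h2 : (fun q => sbform θ0 θc q u) = fun q => Af θ0 θc q u :=
    funext fun q => (Af_apply q u).symm
  rw [h1, h2, fderiv_app (hAd p), fderiv_app (hAd p)]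
  simp [sbform, dxi]

/-- The row map of the 2-form `dθ + (i_S dθ)∧dt` at `p`, as a CLM. -/
def Rc (G : E n → Fin n → ℝ) (θ0 : E n → ℝ) (θc : Fin n → E n → ℝ) (p u : E n) :
    E n →L[ℝ] ℝ :=
  fderiv ℝ (Af θ0 θc) p u - (fderiv ℝ (Af θ0 θc) p).flip u
    + (fderiv ℝ (Af θ0 θc) p (Ssp G p) u - fderiv ℝ (Af θ0 θc) p u (Ssp G p)) • tL
    - u.1 • (fderiv ℝ (Af θ0 θc) p (Ssp G p) - (fderiv ℝ (Af θ0 θc) p).flip (Ssp G p))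

lemma Rc_apply (h0 : Cinf θ0) (hc : ∀ i, Cinf (θc i)) (p u w : E n) :
    Rc G θ0 θc p u w = Om G (sbform θ0 θc) p u w := by
  unfold Om
  rw [Dpt_eq h0 hc p u w, Dpt_eq h0 hc p (Ssp G p) u, Dpt_eq h0 hc p (Ssp G p) w]
  simp only [Rc, ContinuousLinearMap.sub_apply, ContinuousLinearMap.add_apply,
    ContinuousLinearMap.smul_apply, ContinuousLinearMap.flip_apply, tL_apply, smul_eq_mul]
  ring

lemma Rc_S (p u : E n) : Rc G θ0 θc p u (Ssp G p) = 0 := by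
  simp only [Rc, ContinuousLinearMap.sub_apply, ContinuousLinearMap.add_apply,
    ContinuousLinearMap.smul_apply, ContinuousLinearMap.flip_apply, tL_apply, smul_eq_mul]
  have h1 : (Ssp G p).1 = 1 := rfl
  rw [h1]
  ring

lemma bas_sum (c : Unit ⊕ Fin n ⊕ Fin n → ℝ) :
    ∑ b, c b • bas b = ((c (Sum.inl ()) : ℝ),
      (fun j => c (Sum.inr (Sum.inl j))), fun j => c (Sum.inr (Sum.inr j))) := by
  refine Prod.ext ?_ (Prod.ext ?_ ?_)
  · rw [Prod.fst_sum]
    simp [Fintype.sum_sum_type, bas, pdx, pdy, ypart]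
  · rw [Prod.snd_sum, Prod.fst_sum]
    funext j
    rw [Finset.sum_apply]
    simp [Fintype.sum_sum_type, bas, pdx, pdy, ypart, Pi.single_apply]
  · rw [Prod.snd_sum, Prod.snd_sum]
    funext j
    rw [Finset.sum_apply]
    simp [Fintype.sum_sum_type, bas, pdx, pdy, ypart, Pi.single_apply]

lemma ypart_sum (v : Fin n → ℝ) : ∑ j, v j • pdy j = ypart v := by
  refine Prod.ext ?_ (Prod.ext ?_ ?_)
  · rw [Prod.fst_sum]; simp [pdy, ypart]
  · rw [Prod.snd_sum, Prod.fst_sum]; simp [pdy, ypart]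
  · rw [Prod.snd_sum, Prod.snd_sum]
    funext k
    rw [Finset.sum_apply]
    simp [pdy, ypart, Pi.single_apply]

lemma ynondeg (hG : Cinf G) (h0 : Cinf θ0) (hc : ∀ i, Cinf (θc i))
    (hnd : nondeg G (sbform θ0 θc)) (p : E n) (v : Fin n → ℝ)
    (hv : ∀ i, fderiv ℝ (θc i) p (ypart v) = 0) : v = 0 := by
  classical
  have hAd : Differentiable ℝ (Af θ0 θc) := cinf_diff (Af_smooth h0 hc)
  -- (a)  fA w (ypart v) = 0
  have ha : ∀ w : E n, fderiv ℝ (Af θ0 θc) p w (ypart v) = 0 := by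
    intro w
    rw [← fderiv_app (hAd p)]
    have : (fun q => Af θ0 θc q (ypart v)) = fun _ => (0:ℝ) :=
      funext fun q => Af_ypart q v
    rw [this, fderiv_fun_const]
    simp
  -- (b)  fA (ypart v) w = c0 * w.1
  set c0 : ℝ := fderiv ℝ θ0 p (ypart v) - ∑ i, θc i p * v i with hc0
  have hb : ∀ w : E n, fderiv ℝ (Af θ0 θc) p (ypart v) w = c0 * w.1 := by
    intro w
    have hfun : (fun q => Af θ0 θc q w)
        = fun q => θ0 q * w.1 + ∑ i, θc i q * (w.2.1 i - q.2.2 i * w.1) := by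
      funext q
      rw [Af_apply]
      simp [sbform, dxi]
    have hder : HasFDerivAt (fun q => Af θ0 θc q w)
        (w.1 • fderiv ℝ θ0 p + ∑ i, (θc i p • ((0 : E n →L[ℝ] ℝ) - w.1 • yL i)
          + (w.2.1 i - p.2.2 i * w.1) • fderiv ℝ (θc i) p)) p := by
      rw [hfun]
      refine HasFDerivAt.add ?_ (HasFDerivAt.fun_sum fun i _ => ?_)
      · exact ((cinf_diff h0) p).hasFDerivAt.mul_const w.1
      · refine HasFDerivAt.mul ((cinf_diff (hc i)) p).hasFDerivAt ?_
        exact (hasFDerivAt_const (w.2.1 i) p).sub ((yL i).hasFDerivAt.mul_const w.1)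
    rw [← fderiv_app (hAd p), hder.fderiv]
    simp only [ContinuousLinearMap.add_apply, ContinuousLinearMap.sum_apply,
      ContinuousLinearMap.smul_apply, ContinuousLinearMap.sub_apply,
      ContinuousLinearMap.zero_apply, yL_apply, smul_eq_mul]
    have hyp : (ypart v).1 = 0 := rfl
    have hyc : ∀ i, (ypart v).2.2 i = v i := fun _ => rfl
    have : ∀ i ∈ Finset.univ, θc i p * (0 - w.1 * (ypart v).2.2 i)
        + (w.2.1 i - p.2.2 i * w.1) * (fderiv ℝ (θc i) p) (ypart v)
        = -(θc i p * v i) * w.1 := by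
      intro i _
      rw [hv i, hyc i]
      ring
    rw [Finset.sum_congr rfl this, ← Finset.sum_mul, hc0]
    have hns : ∑ i : Fin n, -(θc i p * v i) = -∑ i : Fin n, θc i p * v i := by
      simp
    rw [hns]
    ring
  -- Rc of ypart v is zero
  have hRcy : ∀ u : E n, Rc G θ0 θc p u (ypart v) = 0 := by
    intro u
    simp only [Rc, ContinuousLinearMap.sub_apply, ContinuousLinearMap.add_apply,
      ContinuousLinearMap.smul_apply, ContinuousLinearMap.flip_apply, tL_apply, smul_eq_mul]
    have h1 : (Ssp G p).1 = 1 := rfl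
    have h2 : (ypart v).1 = 0 := rfl
    rw [ha u, ha (Ssp G p), hb u, hb (Ssp G p), h1, h2]
    ring
  -- matrix kernel
  set M := Matrix.of fun a b => Om G (sbform θ0 θc) p (bas a) (bas b) with hM
  have hrank : M.rank = 2 * n := hnd p
  have hmv : ∀ (c : Unit ⊕ Fin n ⊕ Fin n → ℝ),
      M.mulVec c = fun a => Rc G θ0 θc p (bas a) (∑ b, c b • bas b) := by
    intro c
    funext a
    show ∑ b, M a b * c b = _
    rw [map_sum]
    refine Finset.sum_congr rfl fun b _ => ?_
    rw [_root_.map_smul]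
    have : M a b = Rc G θ0 θc p (bas a) (bas b) := (Rc_apply h0 hc p _ _).symm
    rw [this, smul_eq_mul, mul_comm]
  set svec : Unit ⊕ Fin n ⊕ Fin n → ℝ :=
    Sum.elim (fun _ => (1:ℝ)) (Sum.elim (fun i => p.2.2 i) (fun i => -(2 * G p i))) with hsv
  set vvec : Unit ⊕ Fin n ⊕ Fin n → ℝ := Sum.elim 0 (Sum.elim 0 v) with hvv
  have hsum_s : ∑ b, svec b • bas b = Ssp G p := by rw [bas_sum]; rfl
  have hsum_v : ∑ b, vvec b • bas b = ypart v := by rw [bas_sum]; rfl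
  have hsker : M.mulVec svec = 0 := by
    rw [hmv, hsum_s]; funext a; exact Rc_S p (bas a)
  have hvker : M.mulVec vvec = 0 := by
    rw [hmv, hsum_v]; funext a; exact hRcy (bas a)
  by_contra hv0
  obtain ⟨j, hj⟩ : ∃ j, v j ≠ 0 := Function.ne_iff.mp hv0
  have hvne : vvec ≠ 0 := by
    intro h
    exact hj (by simpa [hvv] using congrFun h (Sum.inr (Sum.inr j)))
  have li : LinearIndependent ℝ ![svec, vvec] := by
    rw [LinearIndependent.pair_iff]
    intro s t hst
    have h1 : s = 0 := by simpa [hsv, hvv] using congrFun hst (Sum.inl ())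
    refine ⟨h1, ?_⟩
    rw [h1, zero_smul, zero_add] at hst
    have := congrFun hst (Sum.inr (Sum.inr j))
    simp [hvv] at this
    rcases this with h | h
    · exact h
    · exact absurd h hj
  set K := LinearMap.ker M.mulVecLin with hK
  have hmem : ∀ i : Fin 2, ![svec, vvec] i ∈ K := by
    intro i
    fin_cases i <;> simp [hK, LinearMap.mem_ker, Matrix.mulVecLin_apply, hsker, hvker]
  have li2 : LinearIndependent ℝ (fun i : Fin 2 => (⟨![svec, vvec] i, hmem i⟩ : K)) := by
    apply LinearIndependent.of_comp K.subtype
    exact li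
  have hcard : (2 : ℕ) ≤ Module.finrank ℝ K := by
    simpa using li2.fintype_card_le_finrank
  have hrn := LinearMap.finrank_range_add_finrank_ker M.mulVecLin
  have hfr : Module.finrank ℝ (Unit ⊕ Fin n ⊕ Fin n → ℝ) = 1 + (n + n) := by
    rw [Module.finrank_fintype_fun_eq_card]
    simp
  rw [hfr] at hrn
  have hrdef : M.rank = Module.finrank ℝ (LinearMap.range M.mulVecLin) := rfl
  rw [← hrdef, hrank, ← hK] at hrn
  omega

end S14
/-- Let `θ = θ₀ dt + Σᵢ θᵢ δxⁱ` be a non-degenerate semi-basic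
1-form on `E` with `d(L_Sθ) = 0`.  Then there exists a regular Lagrangian `L`
such that: (1) `L_Sθ = dL`; (2) `θ = θ_L + (θ(S) − L) dt`; (3) `θ(S) − L` is a
first integral of `S`; (4) the 1-form `i_S dθ` is a dual symmetry of `S`. -/
theorem stmt14 (n : ℕ) (hn : 1 ≤ n) (G : E n → Fin n → ℝ) (hG : Cinf G)
    (θ0 : E n → ℝ) (θc : Fin n → E n → ℝ) (h0 : Cinf θ0) (hc : ∀ i, Cinf (θc i))
    (hnd : nondeg G (sbform θ0 θc))
    (hcl : ∀ X Y : E n → E n, Cinf X → Cinf Y → ∀ p : E n,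
      extDop (lieD (Ssp G) (sbform θ0 θc)) X Y p = 0) :
    ∃ L : E n → ℝ, Cinf L ∧ regular L
      ∧ (∀ X : E n → E n, Cinf X → ∀ p : E n,
          lieD (Ssp G) (sbform θ0 θc) X p = fderiv ℝ L p (X p))
      ∧ (∀ (p : E n) (w : E n),
          sbform θ0 θc p w
            = sbform L (fun i q => fderiv ℝ L q (pdy i)) p w
              + (sbform θ0 θc p (Ssp G p) - L p) * w.1)
      ∧ (∀ p : E n, vfd (Ssp G) (fun q => sbform θ0 θc q (Ssp G q) - L q) p = 0)
      ∧ (∀ X : E n → E n, Cinf X → ∀ p : E n,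
          fderiv ℝ (extD (sbform θ0 θc) (Ssp G) X) p (Ssp G p)
            - extD (sbform θ0 θc) (Ssp G) (lieb (Ssp G) X) p = 0) := by
  classical
  obtain ⟨L, hLsm, hL⟩ := poincare1 (S14.alf G θ0 θc) (S14.alf_smooth hG h0 hc)
    (S14.alf_symm hG h0 hc hcl)
  have hfd : ∀ q, fderiv ℝ L q = S14.alf G θ0 θc q := fun q => (hL q).fderiv
  have hLdiff : Differentiable ℝ L := fun q => (hL q).differentiableAt
  have hLy : ∀ (q : E n) (i : Fin n), fderiv ℝ L q (pdy i) = θc i q := by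
    intro q i
    rw [hfd q, S14.alf_pdy hG h0 hc q i]
  refine ⟨L, hLsm, ?_, ?_, ?_, ?_, ?_⟩
  · -- regularity
    intro p
    have hHess : ∀ i j, Hess L p i j = fderiv ℝ (θc j) p (pdy i) := by
      intro i j
      show fderiv ℝ (fun q => fderiv ℝ L q (pdy j)) p (pdy i) = _
      have : (fun q => fderiv ℝ L q (pdy j)) = fun q => θc j q := funext fun q => hLy q j
      rw [this]
    rw [Matrix.isUnit_iff_isUnit_det, isUnit_iff_ne_zero]
    intro hdet
    rw [← Matrix.det_transpose] at hdet
    obtain ⟨v, hvne, hvk⟩ := (Matrix.exists_mulVec_eq_zero_iff).mpr hdet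
    refine hvne (S14.ynondeg hG h0 hc hnd p v ?_)
    intro i
    have hk := congrFun hvk i
    have hexp : ((Hess L p).transpose.mulVec v) i = ∑ j, fderiv ℝ (θc i) p (pdy j) * v j := by
      show ∑ j, (Hess L p).transpose i j * v j = _
      refine Finset.sum_congr rfl fun j _ => ?_
      rw [Matrix.transpose_apply, hHess j i]
    have hyv : fderiv ℝ (θc i) p (ypart v) = ∑ j, fderiv ℝ (θc i) p (pdy j) * v j := by
      rw [← S14.ypart_sum v, map_sum]
      exact Finset.sum_congr rfl fun j _ => by rw [_root_.map_smul, smul_eq_mul, mul_comm]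
    rw [hyv, ← hexp, hk]
    rfl
  · -- (1)
    intro X hX p
    rw [S14.lieD_eq hG h0 hc (S14.cinf_diff hX) p, hfd p]
  · -- (2)
    intro p w
    have h1 : sbform θ0 θc p (Ssp G p) = θ0 p := S14.sbform_S p
    rw [h1]
    simp only [sbform]
    have h2 : ∀ i ∈ Finset.univ, fderiv ℝ L p (pdy i) * dxi i p w = θc i p * dxi i p w := by
      intro i _
      rw [hLy p i]
    rw [Finset.sum_congr rfl h2]
    ring
  · -- (3)
    intro p
    show fderiv ℝ (fun q => sbform θ0 θc q (Ssp G q) - L q) p (Ssp G p) = 0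
    have hfun : (fun q => sbform θ0 θc q (Ssp G q) - L q) = fun q => θ0 q - L q :=
      funext fun q => by rw [S14.sbform_S]
    rw [hfun, fderiv_fun_sub ((S14.cinf_diff h0) p) (hLdiff p)]
    simp only [ContinuousLinearMap.sub_apply]
    rw [hfd p, S14.alf_S hG h0 hc p]
    ring
  · -- (4)
    intro X hX p
    have hXd : Differentiable ℝ X := S14.cinf_diff hX
    have hgdsm : Cinf (fun q => S14.alf G θ0 θc q - fderiv ℝ θ0 q) :=
      (S14.alf_smooth hG h0 hc).sub (S14.cinf_fderiv h0)
    have hgdd : Differentiable ℝ (fun q => S14.alf G θ0 θc q - fderiv ℝ θ0 q) :=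
      S14.cinf_diff hgdsm
    have hSd : Differentiable ℝ (Ssp G) := S14.cinf_diff (S14.Ssp_smooth hG)
    have hlb : Differentiable ℝ (lieb (Ssp G) X) := by
      have : Cinf (lieb (Ssp G) X) := by
        show Cinf (fun q => fderiv ℝ X q (Ssp G q) - fderiv ℝ (Ssp G) q (X q))
        exact ((S14.cinf_fderiv hX).clm_apply (S14.Ssp_smooth hG)).sub
          ((S14.cinf_fderiv (S14.Ssp_smooth hG)).clm_apply hX)
      exact S14.cinf_diff this
    have E1 : ∀ (Y : E n → E n), Differentiable ℝ Y → ∀ q,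
        extD (sbform θ0 θc) (Ssp G) Y q
          = (S14.alf G θ0 θc q - fderiv ℝ θ0 q) (Y q) := by
      intro Y hY q
      have h1 : fderiv ℝ (fun q' => sbform θ0 θc q' (Y q')) q (Ssp G q)
          - sbform θ0 θc q (lieb (Ssp G) Y q) = S14.alf G θ0 θc q (Y q) :=
        S14.lieD_eq hG h0 hc hY q
      have h2 : (fun q' => sbform θ0 θc q' (Ssp G q')) = θ0 :=
        funext fun q' => S14.sbform_S q'
      show fderiv ℝ (fun q' => sbform θ0 θc q' (Y q')) q (Ssp G q)
          - fderiv ℝ (fun q' => sbform θ0 θc q' (Ssp G q')) q (Y q)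
          - sbform θ0 θc q (lieb (Ssp G) Y q) = _
      rw [h2]
      simp only [ContinuousLinearMap.sub_apply]
      linarith [h1]
    have hE : extD (sbform θ0 θc) (Ssp G) X
        = fun q => (S14.alf G θ0 θc q - fderiv ℝ θ0 q) (X q) :=
      funext fun q => E1 X hXd q
    rw [hE, E1 _ hlb p]
    have hclapp := fderiv_clm_apply (hgdd p) (hXd p)
    rw [hclapp]
    have hlieb : lieb (Ssp G) X p = fderiv ℝ X p (Ssp G p) - fderiv ℝ (Ssp G) p (X p) := rfl
    rw [hlieb, map_sub]
    simp only [ContinuousLinearMap.add_apply, ContinuousLinearMap.comp_apply,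
      ContinuousLinearMap.flip_apply]
    -- identity (fun q => gd q (Ssp G q)) = 0, differentiated
    have hid : (fun q => (S14.alf G θ0 θc q - fderiv ℝ θ0 q) (Ssp G q)) = fun _ => (0:ℝ) := by
      funext q
      simp only [ContinuousLinearMap.sub_apply]
      rw [S14.alf_S hG h0 hc q]
      ring
    have hdid := fderiv_clm_apply (hgdd p) (hSd p)
    have hzero : fderiv ℝ (fun q => (S14.alf G θ0 θc q - fderiv ℝ θ0 q) (Ssp G q)) p = 0 := by
      rw [hid]
      exact fderiv_const_apply 0
    rw [hzero] at hdid
    have hdid2 := congrArg (fun (c : E n →L[ℝ] ℝ) => c (X p)) hdid.symm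
    simp only [ContinuousLinearMap.add_apply, ContinuousLinearMap.comp_apply,
      ContinuousLinearMap.flip_apply, ContinuousLinearMap.zero_apply] at hdid2
    -- symmetry of the second derivative of L - θ0
    have hf : ∀ y, HasFDerivAt (fun q => L q - θ0 q)
        ((fun q => S14.alf G θ0 θc q - fderiv ℝ θ0 q) y) y := by
      intro y
      have h0d := ((S14.cinf_diff h0) y).hasFDerivAt
      have := (hL y).sub h0d
      exact this
    have hx : HasFDerivAt (fun q => S14.alf G θ0 θc q - fderiv ℝ θ0 q)
        (fderiv ℝ (fun q => S14.alf G θ0 θc q - fderiv ℝ θ0 q) p) p :=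
      (hgdd p).hasFDerivAt
    have hsymm := second_derivative_symmetric hf hx (X p) (Ssp G p)
    linarith [hdid2, hsymm]
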